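/- Let γ ≥ 1, let K be a compact subset of a real Banach space X, fix f₀ ∈ K and δ > 0, and set B_K := K ∩ B(f₀,δ), where B(f₀,δ) is the closed ball of radius δ centered at f₀. If m ≥ 1 is an integer such that δ*_{m,γ}(K)_X ≤ δ/8, then B_K can be covered by N balls of radius δ/2, where N ≤ (1 + 16γ²)^m. -/

import Mathlib

open Metric

def IsNorm {n : ℕ} (nrm : (Fin n → ℝ) → ℝ) : Prop :=
  (∀ x, 0 ≤ nrm x) ∧
  (∀ x, nrm x = 0 → x = 0) ∧
  (∀ (c : ℝ) (x), nrm (c • x) = |c| * nrm x) ∧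
  (∀ x y, nrm (x + y) ≤ nrm x + nrm y)

noncomputable def stableWidth (X : Type*) [NormedAddCommGroup X]
    (K : Set X) (n : ℕ) (γ : ℝ) : ℝ :=
  sInf { d | ∃ (nrm : (Fin n → ℝ) → ℝ) (a : X → Fin n → ℝ) (M : (Fin n → ℝ) → X),
    IsNorm nrm ∧
    (∀ f ∈ K, ∀ g ∈ K, nrm (a f - a g) ≤ γ * ‖f - g‖) ∧
    (∀ x y, ‖M x - M y‖ ≤ γ * nrm (x - y)) ∧
    d = ⨆ f : K, ‖(f : X) - M (a (f : X))‖ }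

noncomputable def modStableWidth (X : Type*) [NormedAddCommGroup X]
    (K : Set X) (n : ℕ) (γ : ℝ) : ℝ :=
  sInf { d | ∃ (nrm : (Fin n → ℝ) → ℝ) (a : X → Fin n → ℝ) (M : (Fin n → ℝ) → X),
    IsNorm nrm ∧
    (∀ f g : X, nrm (a f - a g) ≤ γ * ‖f - g‖) ∧
    (∀ x y, ‖M x - M y‖ ≤ γ * nrm (x - y)) ∧
    d = ⨆ f : K, ‖(f : X) - M (a (f : X))‖ }

noncomputable def entropyNumber (X : Type*) [NormedAddCommGroup X] (K : Set X) (n : ℕ) : ℝ :=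
  sInf { ε : ℝ | 0 < ε ∧ ∃ T : Finset X, T.card ≤ 2 ^ n ∧ K ⊆ ⋃ c ∈ T, closedBall c ε }

section Aux

open MeasureTheory Module Set ENNReal

lemma pack_card_le {E : Type*} [NormedAddCommGroup E] [NormedSpace ℝ E] [FiniteDimensional ℝ E]
    (c : E) {R r : ℝ} (hR : 0 ≤ R) (hr : 0 < r)
    (s : Finset E) (hs : ∀ x ∈ s, x ∈ closedBall c R)
    (hsep : ∀ x ∈ s, ∀ y ∈ s, x ≠ y → r < dist x y) :
    (s.card : ℝ) ≤ (1 + 2 * R / r) ^ (finrank ℝ E) := by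
  borelize E
  set n := finrank ℝ E with hn
  let μ : Measure E := (finBasis ℝ E).addHaar
  have hdisj : (↑s : Set E).PairwiseDisjoint (fun x => closedBall x (r / 2)) := by
    intro x hx y hy hxy
    exact closedBall_disjoint_closedBall (by linarith [hsep x hx y hy hxy])
  have hmeas : μ (⋃ x ∈ s, closedBall x (r / 2)) = s.card * μ (closedBall 0 (r / 2)) := by
    rw [measure_biUnion_finset hdisj (fun x _ => measurableSet_closedBall)]
    rw [Finset.sum_congr rfl (fun x _ => Measure.addHaar_closedBall_center μ x (r/2))]
    rw [Finset.sum_const, nsmul_eq_mul]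
  have hsub : (⋃ x ∈ s, closedBall x (r / 2)) ⊆ closedBall c (R + r / 2) := by
    intro z hz
    simp only [mem_iUnion, exists_prop] at hz
    obtain ⟨x, hx, hzx⟩ := hz
    have h1 : dist z x ≤ r / 2 := mem_closedBall.1 hzx
    have h2 : dist x c ≤ R := mem_closedBall.1 (hs x hx)
    exact mem_closedBall.2 ((dist_triangle z x c).trans (by linarith))
  have hle : (s.card : ℝ≥0∞) * μ (closedBall 0 (r / 2)) ≤ μ (closedBall c (R + r / 2)) :=
    hmeas ▸ measure_mono hsub
  have hball1 : μ (closedBall 0 (r/2)) = ENNReal.ofReal ((r/2) ^ n) * μ (closedBall 0 1) :=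
    Measure.addHaar_closedBall' μ _ (by linarith)
  have hball2 : μ (closedBall c (R + r/2)) = ENNReal.ofReal ((R + r/2) ^ n) * μ (closedBall 0 1) :=
    Measure.addHaar_closedBall' μ _ (by linarith)
  have hVpos : 0 < μ (closedBall (0:E) 1) := measure_closedBall_pos μ 0 one_pos
  have hVlt : μ (closedBall (0:E) 1) < ⊤ := measure_closedBall_lt_top
  rw [hball1, hball2, ← mul_assoc] at hle
  have hle2 : (s.card : ℝ≥0∞) * ENNReal.ofReal ((r/2) ^ n) ≤ ENNReal.ofReal ((R + r/2) ^ n) :=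
    (ENNReal.mul_le_mul_iff_left hVpos.ne' hVlt.ne).1 hle
  have h3 : ENNReal.ofReal ((s.card : ℝ) * (r/2)^n) ≤ ENNReal.ofReal ((R + r/2)^n) := by
    rw [ENNReal.ofReal_mul (Nat.cast_nonneg _), ENNReal.ofReal_natCast]
    exact hle2
  have h4 : (s.card : ℝ) * (r/2)^n ≤ (R + r/2)^n :=
    (ENNReal.ofReal_le_ofReal_iff (by positivity)).1 h3
  have hrn : (0:ℝ) < (r/2)^n := by positivity
  have hr0 : r ≠ 0 := hr.ne'
  calc (s.card : ℝ) ≤ (R + r/2)^n / (r/2)^n := (le_div_iff₀ hrn).2 h4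
    _ = ((R + r/2) / (r/2))^n := (div_pow _ _ n).symm
    _ = (1 + 2 * R / r)^n := by
        congr 1
        field_simp
        ring

lemma cover_card_le {E : Type*} [NormedAddCommGroup E] [NormedSpace ℝ E] [FiniteDimensional ℝ E]
    (c : E) {R r : ℝ} (hR : 0 ≤ R) (hr : 0 < r) (A : Set E) (hA : A ⊆ closedBall c R) :
    ∃ t : Finset E, (t.card : ℝ) ≤ (1 + 2 * R / r) ^ (finrank ℝ E) ∧
      A ⊆ ⋃ x ∈ t, closedBall x r := by
  classical
  set G : Set (Finset E) := {t | ↑t ⊆ A ∧ ∀ x ∈ t, ∀ y ∈ t, x ≠ y → r < dist x y} with hG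
  have hbound : ∀ t ∈ G, (t.card : ℝ) ≤ (1 + 2*R/r) ^ (finrank ℝ E) := fun t ht =>
    pack_card_le c hR hr t (fun x hx => hA (ht.1 hx)) ht.2
  have hbddN : BddAbove (Finset.card '' G) := by
    refine ⟨Nat.floor ((1 + 2*R/r) ^ (finrank ℝ E)), ?_⟩
    rintro _ ⟨t, ht, rfl⟩
    exact Nat.le_floor (hbound t ht)
  have hne : (Finset.card '' G).Nonempty :=
    ⟨0, ∅, ⟨by simp, by simp⟩, rfl⟩
  obtain ⟨t, htG, htcard⟩ := Nat.sSup_mem hne hbddN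
  refine ⟨t, hbound t htG, ?_⟩
  intro a ha
  by_cases hmem : ∃ x ∈ t, dist a x ≤ r
  · obtain ⟨x, hx, hxd⟩ := hmem
    exact Set.mem_biUnion hx (mem_closedBall.2 hxd)
  · exfalso
    push_neg at hmem
    have hat : a ∉ t := by
      intro h
      have := hmem a h
      rw [dist_self] at this
      linarith
    have hins : insert a t ∈ G := by
      constructor
      · intro z hz
        rw [Finset.coe_insert] at hz
        rcases hz with rfl | hz
        · exact ha
        · exact htG.1 hz
      · intro x hx y hy hxy
        rcases Finset.mem_insert.1 hx with rfl | hx'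
        · rcases Finset.mem_insert.1 hy with rfl | hy'
          · exact absurd rfl hxy
          · exact hmem y hy'
        · rcases Finset.mem_insert.1 hy with rfl | hy'
          · rw [dist_comm]; exact hmem x hx'
          · exact htG.2 x hx' y hy' hxy
    have hc : (insert a t).card ∈ Finset.card '' G := ⟨_, hins, rfl⟩
    have hle := le_csSup hbddN hc
    rw [Finset.card_insert_of_notMem hat, htcard] at hle
    omega

/-- A copy of `Fin m → ℝ` on which we can install a custom norm. -/
def ECopy (m : ℕ) : Type := Fin m → ℝ

noncomputable instance (m : ℕ) : AddCommGroup (ECopy m) := Pi.addCommGroup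

noncomputable instance (m : ℕ) : Module ℝ (ECopy m) := Pi.module _ _ _

noncomputable def ECopy.lequiv (m : ℕ) : ECopy m ≃ₗ[ℝ] (Fin m → ℝ) where
  toFun x := x
  invFun x := x
  map_add' _ _ := rfl
  map_smul' _ _ := rfl
  left_inv _ := rfl
  right_inv _ := rfl

/-- From `stableWidth ≤ something`, extract a near-optimal triple. -/
lemma exists_good (X : Type*) [NormedAddCommGroup X] (K : Set X) (m : ℕ) (γ : ℝ)
    (hγ : 0 ≤ γ) {ε : ℝ} (hε : 0 < ε) :
    ∃ (nrm : (Fin m → ℝ) → ℝ) (a : X → Fin m → ℝ) (M : (Fin m → ℝ) → X),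
      IsNorm nrm ∧
      (∀ f ∈ K, ∀ g ∈ K, nrm (a f - a g) ≤ γ * ‖f - g‖) ∧
      (∀ x y, ‖M x - M y‖ ≤ γ * nrm (x - y)) ∧
      (⨆ f : K, ‖(f : X) - M (a (f : X))‖) < stableWidth X K m γ + ε := by
  have hne : { d | ∃ (nrm : (Fin m → ℝ) → ℝ) (a : X → Fin m → ℝ) (M : (Fin m → ℝ) → X),
      IsNorm nrm ∧
      (∀ f ∈ K, ∀ g ∈ K, nrm (a f - a g) ≤ γ * ‖f - g‖) ∧
      (∀ x y, ‖M x - M y‖ ≤ γ * nrm (x - y)) ∧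
      d = ⨆ f : K, ‖(f : X) - M (a (f : X))‖ }.Nonempty := by
    refine ⟨_, fun x => ∑ i, |x i|, fun _ => 0, fun _ => 0, ⟨?_, ?_, ?_, ?_⟩, ?_, ?_, rfl⟩
    · exact fun x => Finset.sum_nonneg fun i _ => abs_nonneg _
    · intro x hx
      funext i
      have := (Finset.sum_eq_zero_iff_of_nonneg (fun j _ => abs_nonneg (x j))).1 hx i
        (Finset.mem_univ i)
      exact abs_eq_zero.1 this
    · intro c x
      simp only [Pi.smul_apply, smul_eq_mul, abs_mul]
      rw [← Finset.mul_sum]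
    · intro x y
      calc ∑ i, |(x + y) i| = ∑ i, |x i + y i| := rfl
        _ ≤ ∑ i, (|x i| + |y i|) := Finset.sum_le_sum fun i _ => abs_add_le _ _
        _ = (∑ i, |x i|) + ∑ i, |y i| := Finset.sum_add_distrib
    · intro f _ g _
      simp only [sub_self]
      have : ∑ i, |(0 : Fin m → ℝ) i| = 0 := by simp
      rw [this]
      exact mul_nonneg hγ (norm_nonneg _)
    · intro x y
      simp only [sub_self, norm_zero]
      exact mul_nonneg hγ (Finset.sum_nonneg fun i _ => abs_nonneg _)
  obtain ⟨d, hdmem, hdlt⟩ := Real.lt_sInf_add_pos hne hε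
  obtain ⟨nrm, a, M, h1, h2, h3, rfl⟩ := hdmem
  exact ⟨nrm, a, M, h1, h2, h3, hdlt⟩

end Aux

open Module

/-- If δ*_{m,γ}(K)_X ≤ δ/8, then K ∩ B(f₀,δ) can be covered by at most
(1+16γ²)^m balls of radius δ/2. -/
theorem stmt5 {X : Type*} [NormedAddCommGroup X]
    (γ : ℝ) (hγ : 1 ≤ γ) (K : Set X) (hK : IsCompact K)
    (f₀ : X) (hf₀ : f₀ ∈ K) (δ : ℝ) (hδ : 0 < δ)
    (m : ℕ) (hm : 1 ≤ m) (hwidth : stableWidth X K m γ ≤ δ / 8) :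
    ∃ T : Finset X, (T.card : ℝ) ≤ (1 + 16 * γ ^ 2) ^ m ∧
      K ∩ closedBall f₀ δ ⊆ ⋃ c ∈ T, closedBall c (δ / 2) := by
  classical
  have hγ0 : (0:ℝ) < γ := lt_of_lt_of_le one_pos hγ
  obtain ⟨nrm, a, M, hN, ha, hM, hsup⟩ :=
    exists_good X K m γ (by linarith) (show (0:ℝ) < δ/16 by linarith)
  obtain ⟨hN1, hN2, hN3, hN4⟩ := hN
  -- pointwise error bound
  have herr : ∀ f ∈ K, ‖f - M (a f)‖ ≤ 3*δ/16 := by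
    intro f hf
    obtain ⟨ρ, hρ⟩ := hK.isBounded.subset_closedBall f₀
    have hbdd : BddAbove (Set.range fun f : K => ‖(f : X) - M (a (f : X))‖) := by
      refine ⟨ρ + ‖f₀ - M (a f₀)‖ + γ * (γ * ρ), ?_⟩
      rintro _ ⟨⟨g, hg⟩, rfl⟩
      have h1 : ‖g - f₀‖ ≤ ρ := by
        have := hρ hg
        rwa [mem_closedBall, dist_eq_norm] at this
      have h2 : ‖M (a f₀) - M (a g)‖ ≤ γ * nrm (a f₀ - a g) := hM _ _
      have h3 : nrm (a f₀ - a g) ≤ γ * ‖f₀ - g‖ := ha f₀ hf₀ g hg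
      have h4 : ‖f₀ - g‖ = ‖g - f₀‖ := norm_sub_rev _ _
      have h5 : ‖g - M (a g)‖ ≤ ‖g - f₀‖ + ‖f₀ - M (a f₀)‖ + ‖M (a f₀) - M (a g)‖ := by
        have heq : g - M (a g) = (g - f₀) + (f₀ - M (a f₀)) + (M (a f₀) - M (a g)) := by abel
        rw [heq]
        exact (norm_add_le _ _).trans (add_le_add_left (norm_add_le _ _) _)
      have h6 : γ * nrm (a f₀ - a g) ≤ γ * (γ * ρ) := by
        have : nrm (a f₀ - a g) ≤ γ * ρ := by
          refine h3.trans ?_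
          rw [h4]
          exact mul_le_mul_of_nonneg_left h1 (by linarith)
        exact mul_le_mul_of_nonneg_left this (by linarith)
      simp only []
      linarith
    have hle : ‖f - M (a f)‖ ≤ ⨆ f : K, ‖(f : X) - M (a (f : X))‖ :=
      le_ciSup hbdd (⟨f, hf⟩ : K)
    linarith
  -- install the norm on ECopy m
  letI : NormedAddCommGroup (ECopy m) := AddGroupNorm.toNormedAddCommGroup
    { toFun := fun x : ECopy m => nrm x
      map_zero' := by have h := hN3 0 0; simp at h; exact h
      add_le' := fun x y => hN4 x y
      neg' := fun x => by have h := hN3 (-1) (show Fin m → ℝ from x); rw [neg_one_smul, abs_neg, abs_one, one_mul] at h; exact h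
      eq_zero_of_map_eq_zero' := fun x hx => hN2 x hx }
  letI : NormedSpace ℝ (ECopy m) :=
    { (inferInstance : Module ℝ (ECopy m)) with
      norm_smul_le := fun c x => le_of_eq (hN3 c x) }
  haveI : FiniteDimensional ℝ (ECopy m) := (ECopy.lequiv m).symm.finiteDimensional
  have hfr : finrank ℝ (ECopy m) = m := by
    rw [(ECopy.lequiv m).finrank_eq]
    exact Module.finrank_fin_fun (R := ℝ)
  have hdistE : ∀ x y : ECopy m, dist x y = nrm (x - y) := fun x y => dist_eq_norm x y
  set aE : X → ECopy m := fun f => a f with haE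
  have hRpos : (0:ℝ) ≤ γ * δ := by positivity
  have hrpos : (0:ℝ) < δ / (8*γ) := by positivity
  have hAsub : aE '' (K ∩ closedBall f₀ δ) ⊆ closedBall (aE f₀) (γ * δ) := by
    rintro _ ⟨f, ⟨hfK, hfB⟩, rfl⟩
    rw [mem_closedBall, hdistE]
    have h1 : nrm (a f - a f₀) ≤ γ * ‖f - f₀‖ := ha f hfK f₀ hf₀
    have h2 : ‖f - f₀‖ ≤ δ := by
      have := mem_closedBall.1 hfB
      rwa [dist_eq_norm] at this
    have h3 : nrm (aE f - aE f₀) ≤ γ * ‖f - f₀‖ := h1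
    exact h3.trans (mul_le_mul_of_nonneg_left h2 (by linarith))
  obtain ⟨t, htcard, htcov⟩ := cover_card_le (aE f₀) hRpos hrpos _ hAsub
  refine ⟨t.image (fun x : ECopy m => M x), ?_, ?_⟩
  · have hδ0 : δ ≠ 0 := hδ.ne'
    have hγ0' : γ ≠ 0 := hγ0.ne'
    calc ((t.image (fun x : ECopy m => M x)).card : ℝ) ≤ (t.card : ℝ) :=
          Nat.cast_le.2 Finset.card_image_le
      _ ≤ (1 + 2 * (γ * δ) / (δ / (8 * γ))) ^ (finrank ℝ (ECopy m)) := htcard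
      _ = (1 + 16 * γ ^ 2) ^ m := by
          rw [hfr]
          congr 1
          field_simp
          ring
  · intro f hf
    have hfA : aE f ∈ aE '' (K ∩ closedBall f₀ δ) := ⟨f, hf, rfl⟩
    have := htcov hfA
    simp only [Set.mem_iUnion, exists_prop] at this
    obtain ⟨x, hx, hfx⟩ := this
    rw [mem_closedBall, hdistE] at hfx
    refine Set.mem_biUnion (Finset.mem_image_of_mem _ hx) ?_
    rw [mem_closedBall, dist_eq_norm]
    have h1 : ‖f - M (a f)‖ ≤ 3*δ/16 := herr f hf.1
    have h2 : ‖M (a f) - M x‖ ≤ γ * nrm (aE f - x) := hM _ _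
    have h3 : γ * nrm (aE f - x) ≤ γ * (δ/(8*γ)) :=
      mul_le_mul_of_nonneg_left hfx (by linarith)
    have h4 : γ * (δ/(8*γ)) = δ/8 := by
      field_simp
    have h5 : ‖f - M x‖ ≤ ‖f - M (a f)‖ + ‖M (a f) - M x‖ := by
      have heq : f - M x = (f - M (a f)) + (M (a f) - M x) := by abel
      rw [heq]
      exact norm_add_le _ _
    linarith
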